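/- arXiv:2505.04549 — 2 statements merged into one kernel-verified Lean document; each statement's English description precedes it below -/
import Mathlib

section
/- Let A = (Q, E, s, F) be a Wheeler r-GNFA, let ≤ be a Wheeler order on A, and let α ∈ Σ* with α ≠ ε. For 0 < k < min{r+1, |α|}, let f_k = out(Q[1, |G^≺(p(α, |α|−k))|], s(α, k)). Let j* be the largest integer 0 ≤ j ≤ |Q| such that: (i) in(Q[1, j], s(α, k)) ≤ f_k for every 0 < k < min{r+1, |α|}; and (ii) ρ ≺ α for every ρ ∈ Σ^k ∩ λ(Q[h]), for every 1 ≤ h ≤ j and every 0 < k < r+1. Then |G^≺(α)| ≤ j*. -/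
/-- Strict co-lexicographic order: `α ≺ β` iff `α.reverse` is lexicographically
smaller than `β.reverse`. The empty string is the minimum. -/
def ColexLt {σ : Type*} [LinearOrder σ] (α β : List σ) : Prop :=
  List.Lex (· < ·) α.reverse β.reverse

/-- Non-strict co-lexicographic order `α ≼ β`. -/
def ColexLe {σ : Type*} [LinearOrder σ] (α β : List σ) : Prop :=
  ColexLt α β ∨ α = β

/-- `α` is a strict suffix of `β`. -/
def IsStrictSuffix {σ : Type*} (α β : List σ) : Prop :=
  α <:+ β ∧ α ≠ β

/-- `p(α, k)`: the prefix of `α` of length `k`. -/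
def pref {σ : Type*} (α : List σ) (k : ℕ) : List σ := α.take k

/-- `s(α, k)`: the suffix of `α` of length `k`. -/
def suff {σ : Type*} (α : List σ) (k : ℕ) : List σ := α.drop (α.length - k)

/-- The 1-based rank of a state in a finite linear order: `rankQ u = i` means
`u = Q[i]` in the enumeration `Q[1] < Q[2] < ⋯ < Q[|Q|]`. -/
noncomputable def rankQ {Q : Type*} [Fintype Q] [LinearOrder Q] (u : Q) : ℕ :=
  {v : Q | v ≤ u}.ncard

/-- `Q[i, j] = {Q[i], …, Q[j]}` (empty if `i > j`). -/
def Qiv (Q : Type*) [Fintype Q] [LinearOrder Q] (i j : ℕ) : Set Q :=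
  {u | i ≤ rankQ u ∧ rankQ u ≤ j}

/-- A generalized nondeterministic finite automaton: a finite set of
string-labeled edges `E ⊆ Q × Q × Σ*`, an initial state `s`, final states `F`. -/
structure GNFA (σ Q : Type*) where
  E : Finset (Q × Q × List σ)
  s : Q
  F : Finset Q

namespace GNFA

variable {σ Q : Type*}

/-- `I A u β` means `β ∈ I_u`: `β` is obtained by concatenating the edge labels
along some path from `s` to `u` (in particular `ε ∈ I_s`). -/
inductive I (A : GNFA σ Q) : Q → List σ → Prop
  | base : I A A.s []
  | step {u v : Q} {α ρ : List σ} : I A u α → (u, v, ρ) ∈ A.E → I A v (α ++ ρ)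

/-- Reachability along edges. -/
def Reach (A : GNFA σ Q) : Q → Q → Prop :=
  Relation.ReflTransGen (fun x y => ∃ ρ, (x, y, ρ) ∈ A.E)

/-- Every state is reachable from the initial state and is co-reachable
(final or allows reaching a final state). -/
def Standard (A : GNFA σ Q) : Prop :=
  (∀ u, A.Reach A.s u) ∧ ∀ u, ∃ f ∈ A.F, A.Reach u f

/-- An ε-walk from `u` to `v`: a (possibly empty) sequence of ε-labeled edges. -/
def EpsWalk (A : GNFA σ Q) : Q → Q → Prop :=
  Relation.ReflTransGen (fun x y => (x, y, ([] : List σ)) ∈ A.E)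

/-- An `r`-GNFA: all edge labels have length at most `r`. -/
def Bounded (A : GNFA σ Q) (r : ℕ) : Prop := ∀ e ∈ A.E, e.2.2.length ≤ r

/-- A GNFA without ε-transitions: every edge label is nonempty. -/
def NoEps (A : GNFA σ Q) : Prop := ∀ e ∈ A.E, e.2.2 ≠ []

/-- `λ(u)`: the set of strings labeling some edge entering `u`. -/
def lab (A : GNFA σ Q) (u : Q) : Set (List σ) := {ρ | ∃ u', (u', u, ρ) ∈ A.E}

/-- `G_⊣(α)`: states `u` such that some `β ∈ I_u` has `α` as a suffix. -/
def Gsuf (A : GNFA σ Q) (α : List σ) : Set Q := {u | ∃ β, I A u β ∧ α <:+ β}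

/-- `G*(α)`: states reached by an edge whose label has `α` as a suffix. -/
def Gstar (A : GNFA σ Q) (α : List σ) : Set Q := {u | ∃ ρ ∈ A.lab u, α <:+ ρ}

section Colex
variable [LinearOrder σ]

/-- The preorder `u ≼_A v`. -/
def Preceq (A : GNFA σ Q) (u v : Q) : Prop :=
  ∀ α β, I A u α → I A v β →
    ¬((I A u α ∧ I A v α) ∧ (I A u β ∧ I A v β)) → ColexLt α β

/-- `G^≺(α)`: states `u` such that every `β ∈ I_u` satisfies `β ≺ α`. -/
def Gprec (A : GNFA σ Q) (α : List σ) : Set Q := {u | ∀ β, I A u β → ColexLt β α}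

/-- `G^≺_⊣(α) = G^≺(α) ∪ G_⊣(α)`. -/
def GprecSuf (A : GNFA σ Q) (α : List σ) : Set Q := A.Gprec α ∪ A.Gsuf α

/-- The linear order on `Q` is a Wheeler order on `A` (Axioms 1–4). -/
def IsWheeler [LinearOrder Q] (A : GNFA σ Q) : Prop :=
  (∀ u v : Q, u ≤ v → A.Preceq u v) ∧
  (∀ u : Q, A.s ≤ u) ∧
  (∀ u' u v' v : Q, ∀ ρ ρ' : List σ, (u', u, ρ) ∈ A.E → (v', v, ρ') ∈ A.E →
      u < v → ¬IsStrictSuffix ρ' ρ → ColexLe ρ ρ') ∧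
  (∀ u' u v' v : Q, ∀ ρ : List σ, (u', u, ρ) ∈ A.E → (v', v, ρ) ∈ A.E →
      u < v → u' ≤ v')

end Colex

section Indexed
variable [Fintype Q] [LinearOrder Q]

/-- `out(Q[1, m], ρ)`: number of edges labeled `ρ` leaving states in `Q[1, m]`. -/
noncomputable def outC (A : GNFA σ Q) (m : ℕ) (ρ : List σ) : ℕ :=
  {e : Q × Q × List σ | e ∈ A.E ∧ rankQ e.1 ≤ m ∧ e.2.2 = ρ}.ncard

/-- `in(Q[1, m], ρ)`: number of edges labeled `ρ` entering states in `Q[1, m]`. -/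
noncomputable def inC (A : GNFA σ Q) (m : ℕ) (ρ : List σ) : ℕ :=
  {e : Q × Q × List σ | e ∈ A.E ∧ rankQ e.2.1 ≤ m ∧ e.2.2 = ρ}.ncard

/-- `A_max[i]`: the largest `j` such that there is an ε-walk from `Q[j]` to `Q[i]`. -/
noncomputable def Amax (A : GNFA σ Q) (i : ℕ) : ℕ :=
  sSup {j | ∃ u v : Q, rankQ u = i ∧ rankQ v = j ∧ A.EpsWalk v u}

/-- `A_min[i]`: the smallest `j` such that there is an ε-walk from `Q[j]` to `Q[i]`. -/
noncomputable def Amin (A : GNFA σ Q) (i : ℕ) : ℕ :=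
  sInf {j | ∃ u v : Q, rankQ u = i ∧ rankQ v = j ∧ A.EpsWalk v u}

variable [LinearOrder σ]

/-- `f_k = out(Q[1, |G^≺(p(α, |α|−k))|], s(α, k))`. -/
noncomputable def fk (A : GNFA σ Q) (α : List σ) (k : ℕ) : ℕ :=
  A.outC ((A.Gprec (pref α (α.length - k))).ncard) (suff α k)

/-- `g_k = out(Q[1, |G^≺_⊣(p(α, |α|−k))|], s(α, k))`. -/
noncomputable def gk (A : GNFA σ Q) (α : List σ) (k : ℕ) : ℕ :=
  A.outC ((A.GprecSuf (pref α (α.length - k))).ncard) (suff α k)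

/-- The property defining `j*` in Lemmas 2 and 4 (largest `j` satisfying it):
(i) `in(Q[1, j], s(α, k)) ≤ f_k` for every `0 < k < min{r+1, |α|}`; and
(ii) `ρ ≺ α` for every `ρ ∈ Σ^k ∩ λ(Q[h])`, every `1 ≤ h ≤ j`, every `0 < k < r+1`. -/
def Jcond (A : GNFA σ Q) (r : ℕ) (α : List σ) (j : ℕ) : Prop :=
  (∀ k, 0 < k → k < min (r + 1) α.length → A.inC j (suff α k) ≤ A.fk α k) ∧
  (∀ k, 0 < k → k < r + 1 → ∀ h, 1 ≤ h → h ≤ j → ∀ u : Q, rankQ u = h →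
      ∀ ρ : List σ, ρ.length = k → ρ ∈ A.lab u → ColexLt ρ α)

/-- The property defining `i*` (largest `i ≤ |Q|` satisfying it):
if `i ≥ 1` then `Q[i] ∈ G*(α)`. -/
def Icond (A : GNFA σ Q) (α : List σ) (i : ℕ) : Prop :=
  1 ≤ i → ∃ u : Q, rankQ u = i ∧ u ∈ A.Gstar α

/-- The property defining `j°` (smallest `j ≤ |Q|` satisfying it):
`in(Q[1, j], s(α, k)) ≥ g_k` for every `0 < k < min{r+1, |α|}` with `g_k > f_k`. -/
def Jcond2 (A : GNFA σ Q) (r : ℕ) (α : List σ) (j : ℕ) : Prop :=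
  ∀ k, 0 < k → k < min (r + 1) α.length → A.fk α k < A.gk α k →
    A.gk α k ≤ A.inC j (suff α k)

end Indexed

end GNFA

-- auxiliary lemmas
section Aux
variable {σ : Type*} [LinearOrder σ]

lemma lex_append_cancel : ∀ (x y z : List σ),
    List.Lex (·<·) (x ++ y) (x ++ z) → List.Lex (·<·) y z := by
  intro x
  induction x with
  | nil => intro y z h; simpa using h
  | cons a x ih =>
    intro y z h
    cases h with
    | rel h => exact absurd h (lt_irrefl a)
    | cons h => exact ih y z h

lemma not_lex_append_self : ∀ (x y : List σ), ¬ List.Lex (·<·) (x ++ y) x := by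
  intro x
  induction x with
  | nil => intro y h; exact List.not_lex_nil h
  | cons a x ih =>
    intro y h
    cases h with
    | rel h => exact absurd h (lt_irrefl a)
    | cons h => exact ih y h

lemma lex_of_append_lex : ∀ (x y z : List σ),
    List.Lex (·<·) (x ++ y) z → List.Lex (·<·) x z ∨ x = z := by
  intro x
  induction x with
  | nil =>
    intro y z _
    cases z with
    | nil => exact Or.inr rfl
    | cons b z => exact Or.inl (List.Lex.nil)
  | cons a x ih =>
    intro y z h
    cases z with
    | nil => exact absurd h List.not_lex_nil
    | cons b z =>
      cases h with
      | rel h => exact Or.inl (List.Lex.rel h)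
      | cons h =>
        rcases ih y z h with h' | h'
        · exact Or.inl (List.Lex.cons h')
        · exact Or.inr (by rw [h'])

end Aux

section Rank
variable {Q : Type*} [Fintype Q] [LinearOrder Q]

lemma rank_char (S : Set Q) (hS : ∀ u v : Q, u ≤ v → v ∈ S → u ∈ S) (u : Q) :
    u ∈ S ↔ rankQ u ≤ S.ncard := by
  constructor
  · intro hu
    exact Set.ncard_le_ncard (fun v hv => hS v u hv hu) (Set.toFinite _)
  · intro hr
    by_contra hu
    have hsub : S ⊆ {v : Q | v < u} := by
      intro w hw
      by_contra hlt
      exact hu (hS u w (le_of_not_gt hlt) hw)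
    have h1 : S.ncard ≤ {v : Q | v < u}.ncard :=
      Set.ncard_le_ncard hsub (Set.toFinite _)
    have h2 : {v : Q | v < u}.ncard < {v : Q | v ≤ u}.ncard := by
      apply Set.ncard_lt_ncard _ (Set.toFinite _)
      constructor
      · exact fun v hv => le_of_lt hv
      · intro hsub'
        exact absurd (hsub' (le_refl u)) (lt_irrefl u)
    have : rankQ u ≤ {v : Q | v < u}.ncard := le_trans hr h1
    unfold rankQ at this
    omega

end Rank

section Main
variable {σ Q : Type*} [LinearOrder σ]

lemma I_nonempty (A : GNFA σ Q) (hA : A.Standard) (u : Q) : ∃ β, A.I u β := by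
  have h := hA.1 u
  induction h with
  | refl => exact ⟨[], GNFA.I.base⟩
  | tail _ hstep ih =>
    rcases ih with ⟨β, hβ⟩
    rcases hstep with ⟨ρ, hρ⟩
    exact ⟨β ++ ρ, GNFA.I.step hβ hρ⟩

variable [LinearOrder Q]

lemma gprec_lower (A : GNFA σ Q) (hA : A.Standard) (hW : A.IsWheeler)
    (α : List σ) (u v : Q) (huv : u ≤ v) (hv : v ∈ A.Gprec α) :
    u ∈ A.Gprec α := by
  intro β hβ
  rcases I_nonempty A hA v with ⟨γ, hγ⟩
  by_cases hcase : (A.I u β ∧ A.I v β) ∧ (A.I u γ ∧ A.I v γ)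
  · exact hv β hcase.1.2
  · have h := hW.1 u v huv β γ hβ hγ hcase
    have h2 := hv γ hγ
    unfold ColexLt GNFA.Gprec at *
    exact List.lex_trans (fun h₁ h₂ => lt_trans h₁ h₂) h h2

end Main

/-- Let `A` be a Wheeler `r`-GNFA with Wheeler order `≤` and
`α ≠ ε`. With `f_k = out(Q[1, |G^≺(p(α,|α|−k))|], s(α,k))`, let `j*` be the
largest `0 ≤ j ≤ |Q|` such that (i) `in(Q[1,j], s(α,k)) ≤ f_k` for every
`0 < k < min{r+1,|α|}` and (ii) `ρ ≺ α` for every `ρ ∈ Σ^k ∩ λ(Q[h])`, every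
`1 ≤ h ≤ j`, every `0 < k < r+1`. Then `|G^≺(α)| ≤ j*`. -/
theorem gprec_card_le_jstar {σ Q : Type*} [Fintype σ] [LinearOrder σ]
    [Fintype Q] [LinearOrder Q] (A : GNFA σ Q)
    (hA : A.Standard) (hW : A.IsWheeler) (r : ℕ) (hr : A.Bounded r)
    (α : List σ) (hα : α ≠ [])
    (jstar : ℕ) (hj_le : jstar ≤ Fintype.card Q) (hj : A.Jcond r α jstar)
    (hj_max : ∀ j ≤ Fintype.card Q, A.Jcond r α j → j ≤ jstar) :
    (A.Gprec α).ncard ≤ jstar := by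
  have hchar : ∀ (β : List σ) (u : Q), u ∈ A.Gprec β ↔ rankQ u ≤ (A.Gprec β).ncard :=
    fun β u => rank_char _ (fun u v h hv => gprec_lower A hA hW β u v h hv) u
  set m := (A.Gprec α).ncard with hm
  have hmle : m ≤ Fintype.card Q := by
    have := Set.ncard_le_ncard (Set.subset_univ (A.Gprec α)) (Set.toFinite _)
    simpa [Set.ncard_univ] using this
  apply hj_max m hmle
  constructor
  · -- condition (i)
    intro k hk0 hk
    unfold GNFA.inC GNFA.fk GNFA.outC
    apply Set.ncard_le_ncard _ (A.E.finite_toSet.subset (fun e he => he.1))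
    rintro ⟨u', u, ρ⟩ ⟨heE, hrank, hlab⟩
    refine ⟨heE, ?_, hlab⟩
    have hu : u ∈ A.Gprec α := (hchar α u).mpr hrank
    rw [← hchar]
    intro β hβ
    have hβρ : A.I u (β ++ ρ) := GNFA.I.step hβ heE
    have hlt : ColexLt (β ++ ρ) α := hu _ hβρ
    have hαsplit : pref α (α.length - k) ++ suff α k = α := List.take_append_drop _ _
    unfold ColexLt at hlt ⊢
    rw [← hαsplit, ← hlab, List.reverse_append, List.reverse_append] at hlt
    exact lex_append_cancel _ _ _ hlt
  · -- condition (ii)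
    intro k hk0 hkr h hh1 hhm u hu ρ hlen hρ
    have huG : u ∈ A.Gprec α := (hchar α u).mpr (hu ▸ hhm)
    rcases hρ with ⟨u', hedge⟩
    rcases I_nonempty A hA u' with ⟨β, hβ⟩
    have hβρ : A.I u (β ++ ρ) := GNFA.I.step hβ hedge
    have hlt : ColexLt (β ++ ρ) α := huG _ hβρ
    unfold ColexLt at hlt ⊢
    rw [List.reverse_append] at hlt
    rcases lex_of_append_lex _ _ _ hlt with h' | h'
    · exact h'
    · exfalso
      rw [h'] at hlt
      exact not_lex_append_self _ _ hlt
end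

section
/- Let A = (Q, E, s, F) be a Wheeler r-GNFA, let ≤ be a Wheeler order on A, and let α ∈ Σ* with α ≠ ε. Let h* be defined as in the context. If h* > |G^≺(α)|, then |G^≺_⊣(α)| ≥ h* > |G^≺(α)|, and |G^≺_⊣(α)| is the smallest integer t with h* ≤ t ≤ |Q| such that, if t < |Q|, then A_min[t+1] = t+1. -/
/-! ### Auxiliary lemmas -/

set_option linter.unusedSectionVars false

section ColexHelpers
variable {σ : Type*} [LinearOrder σ]

lemma colexLt_trans {a b c : List σ} (h1 : ColexLt a b) (h2 : ColexLt b c) : ColexLt a c := by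
  unfold ColexLt at *
  exact List.lex_trans lt_trans h1 h2

lemma colexLt_irrefl (a : List σ) : ¬ColexLt a a := irrefl_of (List.Lex (·<·)) a.reverse

lemma colexLe_of_not_lt {a b : List σ} (h : ¬ColexLt b a) : ColexLe a b := by
  have hinst : IsTrichotomous (List σ) (List.Lex (· < ·)) := inferInstance
  rcases @trichotomous_of (List σ) _ hinst a.reverse b.reverse with h' | h' | h'
  · exact Or.inl h'
  · exact Or.inr (List.reverse_injective h')
  · exact absurd h' h

private lemma lex_self_append {r : σ → σ → Prop} (l : List σ) {t : List σ} (ht : t ≠ []) :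
    List.Lex r l (l ++ t) := by
  induction l with
  | nil => cases t with
    | nil => exact absurd rfl ht
    | cons a t => exact List.Lex.nil
  | cons a l ih => exact List.Lex.cons ih

lemma suffix_colexLe {a b : List σ} (h : a <:+ b) : ColexLe a b := by
  obtain ⟨d, rfl⟩ := h
  cases d with
  | nil => exact Or.inr rfl
  | cons x d =>
    left
    show List.Lex _ a.reverse ((x :: d) ++ a).reverse
    rw [List.reverse_append]
    exact lex_self_append _ (by simp)

lemma colexLt_append_right {a b : List σ} (h : ColexLt a b) (c : List σ) :
    ColexLt (a ++ c) (b ++ c) := by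
  show List.Lex _ _ _
  rw [List.reverse_append, List.reverse_append]
  exact List.Lex.append_left _ h _

private lemma lex_prefix_sandwich : ∀ {p x y : List σ},
    (List.Lex (·<·) p x ∨ p = x) → List.Lex (·<·) x y → p <+: y → p <+: x := by
  intro p
  induction p with
  | nil => intro x y _ _ _; exact List.nil_prefix
  | cons a p ih =>
    intro x y h1 h2 h3
    cases y with
    | nil => simp at h3
    | cons b y =>
      obtain ⟨rfl, h3'⟩ := List.cons_prefix_cons.mp h3
      rcases h1 with h1 | rfl
      · cases x with
        | nil => exact absurd h1 List.not_lex_nil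
        | cons c x =>
          cases h1 with
          | rel hac =>
            cases h2 with
            | rel hca => exact absurd hca (lt_asymm hac)
            | cons _ => exact absurd hac (lt_irrefl _)
          | cons h1' =>
            cases h2 with
            | rel haa => exact absurd haa (lt_irrefl _)
            | cons h2' => exact List.cons_prefix_cons.mpr ⟨rfl, ih (Or.inl h1') h2' h3'⟩
      · exact List.prefix_refl _

lemma colex_suffix_sandwich {a g b : List σ} (h1 : ColexLe a g) (h2 : ColexLt g b)
    (h3 : a <:+ b) : a <:+ g := by
  rw [← List.reverse_prefix] at h3 ⊢
  refine lex_prefix_sandwich ?_ h2 h3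
  rcases h1 with h | rfl
  · exact Or.inl h
  · exact Or.inr rfl

lemma suffix_split {α β' ρ : List σ} (hs : α <:+ β' ++ ρ) (hn : ¬ α <:+ ρ) :
    ρ.length < α.length ∧ ρ = suff α ρ.length ∧ pref α (α.length - ρ.length) <:+ β' ∧
      pref α (α.length - ρ.length) ++ ρ = α := by
  have hρα : ρ <:+ α :=
    (List.suffix_or_suffix_of_suffix (List.suffix_append β' ρ) hs).resolve_right hn
  have hlen : ρ.length ≤ α.length := hρα.length_le
  have hne : ρ.length ≠ α.length := fun h => hn (hρα.eq_of_length h ▸ List.suffix_refl _)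
  obtain ⟨d, hd⟩ := hρα
  have hlend := congrArg List.length hd
  simp only [List.length_append] at hlend
  have hdlen : d.length = α.length - ρ.length := by omega
  have h2 : ρ = suff α ρ.length := by
    show ρ = α.drop (α.length - ρ.length)
    rw [← hdlen, ← hd, List.drop_left]
  have hpd : pref α (α.length - ρ.length) = d := by
    show α.take (α.length - ρ.length) = d
    rw [← hdlen, ← hd, List.take_left]
  have h4 : pref α (α.length - ρ.length) ++ ρ = α := by rw [hpd, hd]
  refine ⟨lt_of_le_of_ne hlen hne, h2, ?_, h4⟩
  obtain ⟨t, ht⟩ := hs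
  rw [← hd, ← List.append_assoc] at ht
  have h5 := List.append_cancel_right ht
  exact ⟨t, by rw [hpd, h5]⟩

end ColexHelpers

section RankHelpers
variable {Q : Type*} [Fintype Q] [LinearOrder Q]

lemma rankQ_strictMono : StrictMono (rankQ (Q := Q)) := by
  intro u v h
  refine Set.ncard_lt_ncard ?_ (Set.toFinite _)
  have hs : {w : Q | w ≤ u} ⊆ {w : Q | w ≤ v} := fun w hw => le_trans hw h.le
  rw [Set.ssubset_iff_of_subset hs]
  exact ⟨v, le_refl v, fun h' => absurd h' (not_le.2 h)⟩

lemma rankQ_mono {u v : Q} (h : u ≤ v) : rankQ u ≤ rankQ v :=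
  rankQ_strictMono.monotone h

lemma rankQ_lt_iff {u v : Q} : rankQ u < rankQ v ↔ u < v := rankQ_strictMono.lt_iff_lt

lemma rankQ_pos (u : Q) : 0 < rankQ u :=
  (Set.ncard_pos (Set.toFinite _)).mpr ⟨u, le_refl u⟩

lemma rankQ_le_card (u : Q) : rankQ u ≤ Fintype.card Q := by
  have := Set.ncard_le_ncard (Set.subset_univ {v : Q | v ≤ u}) Set.finite_univ
  rwa [Set.ncard_univ, Nat.card_eq_fintype_card] at this

lemma rankQ_surj (i : ℕ) (h1 : 1 ≤ i) (h2 : i ≤ Fintype.card Q) : ∃ u : Q, rankQ u = i := by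
  let f : Q → Fin (Fintype.card Q) := fun u =>
    ⟨rankQ u - 1, by have := rankQ_le_card u; have := rankQ_pos u; omega⟩
  have hinj : Function.Injective f := by
    intro u v h
    have h' := congrArg Fin.val h
    simp only [f] at h'
    have hu := rankQ_pos u; have hv := rankQ_pos v
    exact rankQ_strictMono.injective (by omega)
  have hsurj : Function.Surjective f :=
    ((Fintype.bijective_iff_injective_and_card f).mpr ⟨hinj, by simp⟩).2
  obtain ⟨u, hu⟩ := hsurj ⟨i - 1, by omega⟩
  have h3 := congrArg Fin.val hu
  simp only [f] at h3
  have := rankQ_pos u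
  exact ⟨u, by omega⟩

lemma mem_rankQ_le {S : Set Q} {u : Q} (hdc : ∀ ⦃a b : Q⦄, a ≤ b → b ∈ S → a ∈ S)
    (hu : u ∈ S) : rankQ u ≤ S.ncard :=
  Set.ncard_le_ncard (fun v hv => hdc hv hu) (Set.toFinite _)

lemma rankQ_le_mem {S : Set Q} {u : Q} (hdc : ∀ ⦃a b : Q⦄, a ≤ b → b ∈ S → a ∈ S)
    (h : rankQ u ≤ S.ncard) : u ∈ S := by
  by_contra hu
  have hsub : S ⊆ {v | v < u} := fun v hv => lt_of_not_ge fun hle => hu (hdc hle hv)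
  have h1 : rankQ u = {v : Q | v < u}.ncard + 1 := by
    have he : {v : Q | v ≤ u} = insert u {v : Q | v < u} := by
      ext w; simp [le_iff_lt_or_eq, or_comm]
    rw [rankQ, he, Set.ncard_insert_of_notMem (by simp) (Set.toFinite _)]
  have h2 := Set.ncard_le_ncard hsub (Set.toFinite _)
  omega

end RankHelpers

section GNFAHelpers
variable {σ Q : Type*}

lemma GNFA.I_of_reach {A : GNFA σ Q} {u : Q} (h : A.Reach A.s u) : ∃ β, A.I u β := by
  induction h with
  | refl => exact ⟨[], GNFA.I.base⟩
  | tail h1 h2 ih =>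
    obtain ⟨β, hβ⟩ := ih
    obtain ⟨ρ, he⟩ := h2
    exact ⟨β ++ ρ, hβ.step he⟩

lemma GNFA.eps_crossing {A : GNFA σ Q} {S : Set Q} {v u : Q} (h : A.EpsWalk v u)
    (hv : v ∈ S) (hu : u ∉ S) : ∃ a b, (a, b, ([] : List σ)) ∈ A.E ∧ a ∈ S ∧ b ∉ S := by
  revert hu
  induction h with
  | refl => exact fun hu => absurd hv hu
  | @tail b c h1 h2 ih =>
    intro hu
    by_cases hb : b ∈ S
    · exact ⟨b, c, h2, hb, hu⟩
    · exact ih hb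

variable [LinearOrder σ] [LinearOrder Q]

lemma GNFA.not_Gprec_of_Gsuf {A : GNFA σ Q} {α0 : List σ} {u : Q} (hu : u ∈ A.Gsuf α0) :
    u ∉ A.Gprec α0 := by
  obtain ⟨β, hI, hs⟩ := hu
  intro hp
  have h1 : ColexLt β α0 := hp β hI
  rcases suffix_colexLe hs with h2 | h2
  · exact colexLt_irrefl α0 (colexLt_trans h2 h1)
  · exact colexLt_irrefl α0 (h2 ▸ h1)

lemma GNFA.Gprec_dc {A : GNFA σ Q} (hW : A.IsWheeler) (hA : A.Standard) {α0 : List σ}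
    {u v : Q} (huv : u ≤ v) (hv : v ∈ A.Gprec α0) : u ∈ A.Gprec α0 := by
  intro γ hγ
  by_cases hvγ : A.I v γ
  · exact hv γ hvγ
  · obtain ⟨β, hβ⟩ := GNFA.I_of_reach (hA.1 v)
    have h := hW.1 u v huv γ β hγ hβ (by rintro ⟨⟨_, h⟩, _⟩; exact hvγ h)
    exact colexLt_trans h (hv β hβ)

lemma GNFA.GprecSuf_dc {A : GNFA σ Q} (hW : A.IsWheeler) (hA : A.Standard) {α0 : List σ}
    {u v : Q} (huv : u ≤ v) (hv : v ∈ A.GprecSuf α0) : u ∈ A.GprecSuf α0 := by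
  rcases hv with hv | hv
  · exact Set.mem_union_left _ (GNFA.Gprec_dc hW hA huv hv)
  · by_cases hu : u ∈ A.Gprec α0
    · exact Set.mem_union_left _ hu
    · refine Set.mem_union_right _ ?_
      obtain ⟨β, hIβ, hsβ⟩ := hv
      have hu' : ¬ ∀ β, A.I u β → ColexLt β α0 := hu
      push_neg at hu'
      obtain ⟨γ, hγI, hγn⟩ := hu'
      by_cases huβ : A.I u β
      · exact ⟨β, huβ, hsβ⟩
      · have hlt := hW.1 u v huv γ β hγI hIβ (by rintro ⟨_, ⟨h, _⟩⟩; exact huβ h)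
        exact ⟨γ, hγI, colex_suffix_sandwich (colexLe_of_not_lt hγn) hlt hsβ⟩

lemma GNFA.Gstar_subset_Gsuf {A : GNFA σ Q} (hA : A.Standard) {α0 : List σ}
    {u : Q} (hu : u ∈ A.Gstar α0) : u ∈ A.Gsuf α0 := by
  obtain ⟨ρ, ⟨u', he⟩, hs⟩ := hu
  obtain ⟨β, hβ⟩ := GNFA.I_of_reach (hA.1 u')
  exact ⟨β ++ ρ, hβ.step he, hs.trans (List.suffix_append β ρ)⟩

variable [Fintype Q]

lemma GNFA.gsuf_of_edge {A : GNFA σ Q} {α : List σ} {k : ℕ}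
    {x w : Q} (hx : x ∈ A.Gsuf (pref α (α.length - k))) (he : (x, w, suff α k) ∈ A.E) :
    w ∈ A.Gsuf α := by
  obtain ⟨β, hI, hs⟩ := hx
  refine ⟨β ++ suff α k, hI.step he, ?_⟩
  obtain ⟨d, hd⟩ := hs
  refine ⟨d, ?_⟩
  simp only [suff]
  conv_lhs => rw [← List.take_append_drop (α.length - k) α]
  rw [← List.append_assoc]
  simp only [pref] at hd
  rw [hd]

lemma GNFA.exists_gsuf_edge {A : GNFA σ Q} (hW : A.IsWheeler) (hA : A.Standard)
    {α : List σ} {k : ℕ} (hfg : A.fk α k < A.gk α k) :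
    ∃ x0 w0, (x0, w0, suff α k) ∈ A.E ∧ x0 ∈ A.Gsuf (pref α (α.length - k)) ∧
      w0 ∈ A.Gsuf α := by
  have hns : ¬ ({e : Q × Q × List σ | e ∈ A.E ∧
        rankQ e.1 ≤ (A.GprecSuf (pref α (α.length - k))).ncard ∧ e.2.2 = suff α k} ⊆
      {e : Q × Q × List σ | e ∈ A.E ∧
        rankQ e.1 ≤ (A.Gprec (pref α (α.length - k))).ncard ∧ e.2.2 = suff α k}) := by
    intro hsub
    have h1 := Set.ncard_le_ncard hsub (Set.Finite.subset A.E.finite_toSet (fun e he => he.1))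
    have h2 : A.gk α k ≤ A.fk α k := h1
    omega
  obtain ⟨⟨x0, w0, ρ⟩, hmem, hnmem⟩ := Set.not_subset.mp hns
  obtain ⟨hE, hrk, hlab⟩ := hmem
  obtain rfl : ρ = suff α k := hlab
  have hxmem : x0 ∈ A.GprecSuf (pref α (α.length - k)) :=
    rankQ_le_mem (fun a b hab hb => GNFA.GprecSuf_dc hW hA hab hb) hrk
  have hxnp : x0 ∉ A.Gprec (pref α (α.length - k)) := by
    intro hp
    exact hnmem ⟨hE, mem_rankQ_le (fun a b hab hb => GNFA.Gprec_dc hW hA hab hb) hp, rfl⟩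
  have hxs : x0 ∈ A.Gsuf (pref α (α.length - k)) := by
    rcases hxmem with h | h
    · exact absurd h hxnp
    · exact h
  exact ⟨x0, w0, hE, hxs, GNFA.gsuf_of_edge hxs hE⟩

end GNFAHelpers
/-- Let `A` be a Wheeler `r`-GNFA with Wheeler order `≤` and
`α ≠ ε`. With `i*`, `j°` and `h* = max{|G^≺(α)|, i*, j°}` as in the context,
if `h* > |G^≺(α)|`, then `|G^≺_⊣(α)| ≥ h* > |G^≺(α)|`, and `|G^≺_⊣(α)|` is the
smallest `h* ≤ t ≤ |Q|` such that, if `t < |Q|`, then `A_min[t+1] = t+1`. -/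
theorem gprecsuf_card_eq_smallest_t {σ Q : Type*} [Fintype σ] [LinearOrder σ]
    [Fintype Q] [LinearOrder Q] (A : GNFA σ Q)
    (hA : A.Standard) (hW : A.IsWheeler) (r : ℕ) (hr : A.Bounded r)
    (α : List σ) (hα : α ≠ [])
    (istar : ℕ) (hi_le : istar ≤ Fintype.card Q) (hi : A.Icond α istar)
    (hi_max : ∀ i ≤ Fintype.card Q, A.Icond α i → i ≤ istar)
    (jo : ℕ) (hjo_le : jo ≤ Fintype.card Q) (hjo : A.Jcond2 r α jo)
    (hjo_min : ∀ j ≤ Fintype.card Q, A.Jcond2 r α j → jo ≤ j)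
    (hstar : ℕ) (hh : hstar = max (max (A.Gprec α).ncard istar) jo)
    (hgt : (A.Gprec α).ncard < hstar) :
    hstar ≤ (A.GprecSuf α).ncard ∧ (A.Gprec α).ncard < (A.GprecSuf α).ncard ∧
    (A.GprecSuf α).ncard ≤ Fintype.card Q ∧
    ((A.GprecSuf α).ncard < Fintype.card Q →
      A.Amin ((A.GprecSuf α).ncard + 1) = (A.GprecSuf α).ncard + 1) ∧
    ∀ t, hstar ≤ t → t ≤ Fintype.card Q →
      (t < Fintype.card Q → A.Amin (t + 1) = t + 1) →
      (A.GprecSuf α).ncard ≤ t := by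
  classical
  set n := Fintype.card Q with hn
  have hEfin : ∀ (P : Q × Q × List σ → Prop), {e : Q × Q × List σ | e ∈ A.E ∧ P e}.Finite :=
    fun P => Set.Finite.subset A.E.finite_toSet (fun e he => he.1)
  have hdcP : ∀ γ : List σ, ∀ ⦃a b : Q⦄, a ≤ b → b ∈ A.Gprec γ → a ∈ A.Gprec γ :=
    fun γ a b hab hb => GNFA.Gprec_dc hW hA hab hb
  have hdcPS : ∀ γ : List σ, ∀ ⦃a b : Q⦄, a ≤ b → b ∈ A.GprecSuf γ → a ∈ A.GprecSuf γ :=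
    fun γ a b hab hb => GNFA.GprecSuf_dc hW hA hab hb
  set T := (A.GprecSuf α).ncard with hT
  set c := (A.Gprec α).ncard with hc
  have hTn : T ≤ n := by
    have := Set.ncard_le_ncard (Set.subset_univ (A.GprecSuf α)) Set.finite_univ
    rwa [Set.ncard_univ, Nat.card_eq_fintype_card] at this
  have histar_le : istar ≤ hstar := hh ▸ le_max_of_le_left (le_max_right _ _)
  have hjo_le' : jo ≤ hstar := hh ▸ le_max_right _ _
  -- core counting argument: Jcond2 holds at T
  have hJT : A.Jcond2 r α T := by
    intro k hk0 hk1 hfg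
    obtain ⟨x0, w0, he0, hx0, hw0⟩ := GNFA.exists_gsuf_edge hW hA hfg
    have hsub : {e : Q × Q × List σ | e ∈ A.E ∧
          rankQ e.1 ≤ (A.GprecSuf (pref α (α.length - k))).ncard ∧ e.2.2 = suff α k}
        ⊆ {e : Q × Q × List σ | e ∈ A.E ∧ rankQ e.2.1 ≤ T ∧ e.2.2 = suff α k} := by
      rintro ⟨x, w, ρ⟩ ⟨heE, hrx, hlab⟩
      obtain rfl : ρ = suff α k := hlab
      refine ⟨heE, ?_, rfl⟩
      have hxmem : x ∈ A.GprecSuf (pref α (α.length - k)) := rankQ_le_mem (hdcPS _) hrx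
      rcases hxmem with hxp | hxs
      · -- x ∈ Gprec p : compare with the witness edge via Axiom 4
        have hww0 : w ≤ w0 := by
          by_contra hlt
          push_neg at hlt
          have hx0x : x0 ≤ x := hW.2.2.2 x0 w0 x w (suff α k) he0 heE hlt
          have h1 : rankQ x0 ≤ (A.Gprec (pref α (α.length - k))).ncard :=
            le_trans (rankQ_mono hx0x) (mem_rankQ_le (hdcP _) hxp)
          exact (GNFA.not_Gprec_of_Gsuf hx0) (rankQ_le_mem (hdcP _) h1)
        exact le_trans (rankQ_mono hww0)
          (mem_rankQ_le (hdcPS _) (Set.mem_union_right _ hw0))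
      · have hws := GNFA.gsuf_of_edge hxs heE
        exact mem_rankQ_le (hdcPS _) (Set.mem_union_right _ hws)
    exact Set.ncard_le_ncard hsub (hEfin _)
  -- Gsuf α is nonempty
  have hGsufne : ∃ x0, x0 ∈ A.Gsuf α := by
    have hsplit : c < istar ∨ c < jo := by
      by_contra hcon
      push_neg at hcon
      have : hstar ≤ c := hh ▸ max_le (max_le le_rfl hcon.1) hcon.2
      omega
    rcases hsplit with hci | hcj
    · obtain ⟨u, _, hmem⟩ := hi (by omega)
      exact ⟨u, GNFA.Gstar_subset_Gsuf hA hmem⟩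
    · have h0 : ¬ A.Jcond2 r α 0 := fun hJ => by
        have := hjo_min 0 (Nat.zero_le _) hJ; omega
      simp only [GNFA.Jcond2] at h0
      push_neg at h0
      obtain ⟨k, hk0, hk1, hfg, _⟩ := h0
      obtain ⟨x0, w0, _, _, hw0⟩ := GNFA.exists_gsuf_edge hW hA hfg
      exact ⟨w0, hw0⟩
  -- Part 1 : hstar ≤ T
  have h1 : hstar ≤ T := by
    rw [hh]
    refine max_le (max_le ?_ ?_) (hjo_min T hTn hJT)
    · exact Set.ncard_le_ncard (fun x hx => Set.mem_union_left _ hx) (Set.toFinite _)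
    · rcases Nat.eq_zero_or_pos istar with h | h
      · omega
      · obtain ⟨u, hu, hmem⟩ := hi h
        have hmem' : u ∈ A.GprecSuf α :=
          Set.mem_union_right _ (GNFA.Gstar_subset_Gsuf hA hmem)
        exact hu ▸ mem_rankQ_le (hdcPS _) hmem'
  -- Part 4 : Amin (T+1) = T+1 when T < n
  have h4 : T < n → A.Amin (T + 1) = T + 1 := by
    intro hTlt
    obtain ⟨u, hu⟩ := rankQ_surj (Q := Q) (T + 1) (by omega) (by omega)
    have huNot : u ∉ A.GprecSuf α := fun hmem => by
      have h' := mem_rankQ_le (hdcPS _) hmem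
      rw [← hT] at h'; omega
    apply le_antisymm
    · exact Nat.sInf_le ⟨u, u, hu, hu, Relation.ReflTransGen.refl⟩
    · refine le_csInf ⟨T + 1, u, u, hu, hu, Relation.ReflTransGen.refl⟩ ?_
      rintro j ⟨u', v, hu', hv, hwalk⟩
      by_contra hj
      push_neg at hj
      have hvmem : v ∈ A.GprecSuf α := rankQ_le_mem (hdcPS _) (by rw [← hT]; omega)
      have hu'Not : u' ∉ A.GprecSuf α := fun hmem => by
        have h' := mem_rankQ_le (hdcPS _) hmem
        rw [← hT] at h'; omega
      obtain ⟨a, b, he, haS, hbS⟩ := GNFA.eps_crossing hwalk hvmem hu'Not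
      rcases haS with haP | haSuf
      · obtain ⟨δ, hδ⟩ := GNFA.I_of_reach (hA.1 a)
        have hδb : A.I b δ := by
          have := hδ.step he; rwa [List.append_nil] at this
        obtain ⟨x0, hx0⟩ := hGsufne
        obtain ⟨β0, hβ0I, hβ0s⟩ := hx0
        have hx0b : x0 < b := by
          rw [← rankQ_lt_iff]
          have h5 : rankQ x0 ≤ T := mem_rankQ_le (hdcPS _) (Set.mem_union_right _ ⟨β0, hβ0I, hβ0s⟩)
          have h6 : ¬ rankQ b ≤ T := fun hh' => hbS (rankQ_le_mem (hdcPS _) hh')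
          omega
        have hpre := hW.1 x0 b (le_of_lt hx0b) β0 δ hβ0I hδb
          (by rintro ⟨⟨_, hIbβ0⟩, _⟩; exact hbS (Set.mem_union_right _ ⟨β0, hIbβ0, hβ0s⟩))
        have h7 : ColexLt δ α := haP δ hδ
        rcases suffix_colexLe hβ0s with h8 | h8
        · exact colexLt_irrefl _ (colexLt_trans (colexLt_trans hpre h7) h8)
        · exact colexLt_irrefl _ (h8 ▸ colexLt_trans hpre h7)
      · obtain ⟨β, hI, hs⟩ := haSuf
        have hIb : A.I b β := by
          have := hI.step he; rwa [List.append_nil] at this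
        exact hbS (Set.mem_union_right _ ⟨β, hIb, hs⟩)
  -- Claim C : every state of Gsuf α is ε-reachable from a state of rank ≤ hstar
  have hC : ∀ (w : Q) (β : List σ), A.I w β → α <:+ β →
      ∃ v, A.EpsWalk v w ∧ rankQ v ≤ hstar := by
    intro w β hI
    induction hI with
    | base =>
      intro hsuf
      exact absurd (List.suffix_nil.mp hsuf) hα
    | @step x w' β' ρ hIx he ih =>
      intro hsuf
      by_cases hrw : rankQ w' ≤ hstar
      · exact ⟨w', Relation.ReflTransGen.refl, hrw⟩
      push_neg at hrw
      have hGstar : w' ∉ A.Gstar α := by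
        intro hmem
        have hic : A.Icond α (rankQ w') := fun _ => ⟨w', rfl, hmem⟩
        have := hi_max _ (rankQ_le_card w') hic
        omega
      have hnρ : ¬ α <:+ ρ := fun hsρ => hGstar ⟨ρ, ⟨x, he⟩, hsρ⟩
      by_cases hρ : ρ = []
      · subst hρ
        rw [List.append_nil] at hsuf
        obtain ⟨v, hwv, hrv⟩ := ih hsuf
        exact ⟨v, hwv.tail he, hrv⟩
      · exfalso
        obtain ⟨hklt, hρeq, hpre, _⟩ := suffix_split hsuf hnρ
        set k := ρ.length with hk
        have hk0 : 0 < k := List.length_pos_iff.mpr hρ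
        have hkr : k ≤ r := hr _ he
        have hxg : x ∈ A.Gsuf (pref α (α.length - k)) := ⟨β', hIx, hpre⟩
        set m := (A.GprecSuf (pref α (α.length - k))).ncard with hm
        set m' := (A.Gprec (pref α (α.length - k))).ncard with hm'
        have hrx : rankQ x ≤ m := mem_rankQ_le (hdcPS _) (Set.mem_union_right _ hxg)
        have hrx' : ¬ rankQ x ≤ m' := fun h' =>
          GNFA.not_Gprec_of_Gsuf hxg (rankQ_le_mem (hdcP _) h')
        set S := {e : Q × Q × List σ | e ∈ A.E ∧ rankQ e.1 ≤ m ∧ e.2.2 = suff α k} with hS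
        have heS : (x, w', ρ) ∈ S := ⟨he, hrx, hρeq⟩
        have hm'm : m' ≤ m :=
          Set.ncard_le_ncard (fun y hy => Set.mem_union_left _ hy) (Set.toFinite _)
        have hSfin : S.Finite := hEfin _
        have hfg : A.fk α k < A.gk α k := by
          have hsub : {e : Q × Q × List σ | e ∈ A.E ∧ rankQ e.1 ≤ m' ∧ e.2.2 = suff α k}
              ⊆ S \ {(x, w', ρ)} := by
            rintro e ⟨h1', h2', h3'⟩
            refine ⟨⟨h1', le_trans h2' hm'm, h3'⟩, ?_⟩
            intro hee
            rw [Set.mem_singleton_iff] at hee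
            subst hee
            exact hrx' h2'
          exact lt_of_le_of_lt (Set.ncard_le_ncard hsub hSfin.diff)
            (Set.ncard_diff_singleton_lt_of_mem heS hSfin)
        have hkmin : k < min (r + 1) α.length := lt_min (by omega) hklt
        have hin := hjo k hk0 hkmin hfg
        set Ts := {e : Q × Q × List σ | e ∈ A.E ∧ rankQ e.2.1 ≤ jo ∧ e.2.2 = suff α k} with hTs
        have heT : (x, w', ρ) ∉ Ts := by
          rintro ⟨_, h2', _⟩
          simp only at h2'
          omega
        have hex : ∃ e2, e2 ∈ Ts ∧ e2 ∉ S := by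
          by_contra hno
          push_neg at hno
          have hsub2 : Ts ⊆ S \ {(x, w', ρ)} := fun e2 he2 =>
            ⟨hno e2 he2, fun hee => heT (Set.mem_singleton_iff.mp hee ▸ he2)⟩
          have h9 : A.inC jo (suff α k) ≤ (S \ {(x, w', ρ)}).ncard :=
            Set.ncard_le_ncard hsub2 hSfin.diff
          have h10 := Set.ncard_diff_singleton_lt_of_mem heS hSfin
          have h11 : A.gk α k = S.ncard := rfl
          omega
        obtain ⟨⟨y', y, ρ2⟩, h2T, h2S⟩ := hex
        obtain ⟨h2E, h2r, h2lab⟩ := h2T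
        obtain rfl : ρ2 = suff α k := h2lab
        have hyw : y < w' := by
          rw [← rankQ_lt_iff]
          have : rankQ y ≤ jo := h2r
          omega
        have h12 : y' ≤ x := hW.2.2.2 y' y x w' (suff α k) h2E (hρeq ▸ he) hyw
        exact h2S ⟨h2E, le_trans (rankQ_mono h12) hrx, rfl⟩
  -- Part 5 : minimality
  have h5 : ∀ t, hstar ≤ t → t ≤ n → (t < n → A.Amin (t + 1) = t + 1) → T ≤ t := by
    intro t ht1 ht2 hAm
    by_contra hTt
    push_neg at hTt
    have htn : t < n := lt_of_lt_of_le hTt hTn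
    have hAmt := hAm htn
    obtain ⟨u, hu⟩ := rankQ_surj (Q := Q) (t + 1) (by omega) (by omega)
    have humem : u ∈ A.GprecSuf α := rankQ_le_mem (hdcPS _) (by rw [← hT]; omega)
    have hunp : u ∉ A.Gprec α := fun hmem => by
      have h' := mem_rankQ_le (hdcP _) hmem
      rw [← hc] at h'; omega
    have husuf : u ∈ A.Gsuf α := by
      rcases humem with h | h
      · exact absurd h hunp
      · exact h
    obtain ⟨β, hIβ, hsβ⟩ := husuf
    obtain ⟨v, hwalk, hrv⟩ := hC u β hIβ hsβ
    have hle : A.Amin (t + 1) ≤ rankQ v := Nat.sInf_le ⟨u, v, hu, rfl, hwalk⟩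
    omega
  exact ⟨h1, lt_of_lt_of_le hgt h1, hTn, h4, h5⟩
end
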